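/- Let N ≥ 1 and let G be a symmetric real N×N matrix. Then the following are equivalent: (i) for every vector c ∈ ℝ^N with all entries strictly positive, the matrix diag(1/c₁, …, 1/c_N) + G is positive definite; (ii) G is positive semidefinite. -/

import Mathlib

/-- Lemma 1 of the paper: the PNP-steric free energy density is strictly convex on the
positive orthant (its Hessian `diag(1/c) + G` is positive definite for every positive `c`)
if and only if the steric interaction matrix `G` is positive semidefinite. -/
theorem stmt0 (N : ℕ) (hN : 1 ≤ N) (G : Matrix (Fin N) (Fin N) ℝ) (hG : G.IsSymm) :
    (∀ c : Fin N → ℝ, (∀ i, 0 < c i) →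
      (Matrix.diagonal (fun i => (c i)⁻¹) + G).PosDef) ↔ G.PosSemidef := by
  constructor
  · intro h
    refine Matrix.posSemidef_iff_dotProduct_mulVec.mpr ⟨hG, fun x => ?_⟩
    by_contra hneg
    push_neg at hneg
    set q : ℝ := dotProduct (star x) (G.mulVec x) with hq
    have hqneg : q < 0 := hneg
    have hx0 : x ≠ 0 := by
      rintro rfl
      rw [hq] at hqneg
      simp [dotProduct] at hqneg
    set S : ℝ := ∑ i, x i * x i with hS
    have hSnn : 0 ≤ S := Finset.sum_nonneg fun i _ => mul_self_nonneg _
    have hqpos0 : 0 < -q := by linarith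
    set t : ℝ := S / (-q) + 1 with ht
    have htpos : 0 < t := by positivity
    have hpd := h (fun _ => t) (fun _ => htpos)
    have h2 := (Matrix.posDef_iff_dotProduct_mulVec.mp hpd).2 hx0
    have hdot : dotProduct (star x) (((Matrix.diagonal (fun _ : Fin N => t⁻¹)) + G).mulVec x)
        = t⁻¹ * S + q := by
      rw [Matrix.add_mulVec, dotProduct_add]
      congr 1
      simp only [dotProduct, Matrix.mulVec_diagonal, Pi.star_apply, star_trivial, hS,
        Finset.mul_sum]
      exact Finset.sum_congr rfl fun i _ => by ring
    rw [hdot] at h2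
    have hqpos : 0 < -q := by linarith
    have hcancel : S / (-q) * (-q) = S := div_mul_cancel₀ _ (ne_of_gt hqpos)
    have hSt : S < t * (-q) := by
      rw [ht, add_mul, hcancel]
      linarith
    have hstep : t⁻¹ * S < -q := (inv_mul_lt_iff₀ htpos).mpr hSt
    linarith
  · intro hPSD c hc
    exact (Matrix.PosDef.diagonal (fun i => inv_pos.mpr (hc i))).add_posSemidef hPSD
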